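/- Let R be a Noetherian ring and f_1, …, f_c a regular sequence. Set f = f_1⋯f_c. Then for integers b > a ≥ 1, the colon ideal (𝐟^{[b]} : 𝐟^{[a]}) equals f^{b−a}R + 𝐟^{[b]}, where 𝐟^{[t]} = (f_1^t, …, f_c^t). -/

import Mathlib

namespace St4Aux

variable {R : Type*} [CommRing R]

/-- Weak regularity of a list of elements relative to an ideal `K`
(i.e. on `R ⧸ K`), defined by recursion on the list. -/
def wrl (K : Ideal R) : List R → Prop
  | [] => True
  | x :: l => (∀ u : R, u * x ∈ K → u ∈ K) ∧ wrl (K ⊔ Ideal.span {x}) l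

@[simp] lemma wrl_nil (K : Ideal R) : wrl K ([] : List R) := trivial

@[simp] lemma wrl_cons {K : Ideal R} {x : R} {l : List R} :
    wrl K (x :: l) ↔ (∀ u : R, u * x ∈ K → u ∈ K) ∧ wrl (K ⊔ Ideal.span {x}) l :=
  Iff.rfl

/-- The "middle of a short exact sequence" dévissage, at the level of ideals. -/
theorem wrl_mid (l : List R) : ∀ (A B C : Ideal R) (y : R),
    (∀ u, u * y ∈ C ↔ u ∈ A) → (B = C ⊔ Ideal.span {y}) →
    wrl A l → wrl B l → wrl C l := by
  induction l with
  | nil => intros; trivial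
  | cons r l ih =>
    rintro A B C y h1 h2 ⟨hAr, hA⟩ ⟨hBr, hB⟩
    constructor
    · intro u hu
      have huB : u ∈ B := hBr u (by rw [h2]; exact Ideal.mem_sup_left hu)
      rw [h2] at huB
      obtain ⟨cc, hc, z, hz, rfl⟩ := Submodule.mem_sup.mp huB
      obtain ⟨v, rfl⟩ := Ideal.mem_span_singleton.mp hz
      have h3 : (v * r) * y ∈ C := by
        have : (cc + y * v) * r - cc * r = (v * r) * y := by ring
        rw [← this]
        exact Ideal.sub_mem _ hu (Ideal.mul_mem_right _ _ hc)
      have hv : v ∈ A := hAr v ((h1 (v * r)).mp h3)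
      have : y * v ∈ C := by rw [mul_comm]; exact (h1 v).mpr hv
      exact Ideal.add_mem _ hc this
    · refine ih (A ⊔ Ideal.span {r}) (B ⊔ Ideal.span {r}) (C ⊔ Ideal.span {r}) y ?_ ?_ hA hB
      · intro u
        constructor
        · intro hu
          obtain ⟨cc, hc, z, hz, hzz⟩ := Submodule.mem_sup.mp hu
          obtain ⟨w, rfl⟩ := Ideal.mem_span_singleton.mp hz
          have hwr : w * r ∈ B := by
            have : w * r = u * y - cc := by rw [← hzz]; ring
            rw [this, h2]
            exact Ideal.sub_mem _
              (Ideal.mem_sup_right (Ideal.mem_span_singleton.mpr (dvd_mul_left y u)))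
              (Ideal.mem_sup_left hc)
          have hw : w ∈ B := hBr w hwr
          rw [h2] at hw
          obtain ⟨c', hc', z', hz', rfl⟩ := Submodule.mem_sup.mp hw
          obtain ⟨v, rfl⟩ := Ideal.mem_span_singleton.mp hz'
          have h4 : (u - v * r) * y ∈ C := by
            have : (u - v * r) * y = cc + c' * r := by
              have expand : u * y = cc + r * (c' + y * v) := by rw [← hzz]
              calc (u - v * r) * y = u * y - v * r * y := by ring
              _ = cc + r * (c' + y * v) - v * r * y := by rw [expand]
              _ = cc + c' * r := by ring
            rw [this]
            exact Ideal.add_mem _ hc (Ideal.mul_mem_right _ _ hc')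
          have : u - v * r ∈ A := (h1 _).mp h4
          have : (u - v * r) + v * r ∈ A ⊔ Ideal.span {r} :=
            Ideal.add_mem _ (Ideal.mem_sup_left this)
              (Ideal.mem_sup_right (Ideal.mem_span_singleton.mpr (dvd_mul_left r v)))
          simpa using this
        · intro hu
          obtain ⟨α, hα, z, hz, rfl⟩ := Submodule.mem_sup.mp hu
          obtain ⟨w, rfl⟩ := Ideal.mem_span_singleton.mp hz
          have : (α + r * w) * y = α * y + r * (w * y) := by ring
          rw [this]
          exact Ideal.add_mem _ (Ideal.mem_sup_left ((h1 α).mpr hα))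
            (Ideal.mem_sup_right (Ideal.mem_span_singleton.mpr (dvd_mul_right r (w*y))))
      · rw [h2, sup_right_comm]

/-- Nonzerodivisor mod `K` implies all powers are. -/
theorem nzd_pow {K : Ideal R} {x : R} (hx : ∀ u : R, u * x ∈ K → u ∈ K) :
    ∀ t, ∀ u : R, u * x ^ t ∈ K → u ∈ K := by
  intro t
  induction t with
  | zero => simpa using fun u h => h
  | succ t ih =>
    intro u hu
    refine ih (u := u) ?_
    refine hx _ ?_
    have : u * x ^ t * x = u * x ^ (t + 1) := by ring
    rwa [this]

theorem wrl_pow_quot {K : Ideal R} {x : R} {l : List R}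
    (hx : ∀ u : R, u * x ∈ K → u ∈ K) (hl : wrl (K ⊔ Ideal.span {x}) l) :
    ∀ t : ℕ, wrl (K ⊔ Ideal.span {x ^ (t + 1)}) l := by
  intro t
  induction t with
  | zero => rw [pow_one]; exact hl
  | succ t ih =>
    refine wrl_mid l (K ⊔ Ideal.span {x}) (K ⊔ Ideal.span {x ^ (t + 1)})
      (K ⊔ Ideal.span {x ^ (t + 2)}) (x ^ (t + 1)) ?_ ?_ hl ih
    · intro u
      constructor
      · intro hu
        obtain ⟨k, hk, z, hz, hzz⟩ := Submodule.mem_sup.mp hu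
        obtain ⟨v, rfl⟩ := Ideal.mem_span_singleton.mp hz
        have hk' : (u - v * x) * x ^ (t + 1) ∈ K := by
          have heq : (u - v * x) * x ^ (t + 1) = k := by
            have h5 : u * x ^ (t + 1) = k + x ^ (t + 2) * v := hzz.symm
            calc (u - v * x) * x ^ (t + 1)
                = u * x ^ (t + 1) - v * (x ^ (t + 2)) := by ring
              _ = k + x ^ (t + 2) * v - v * x ^ (t + 2) := by rw [h5]
              _ = k := by ring
          rw [heq]; exact hk
        have h6 := nzd_pow hx (t + 1) _ hk'
        exact Submodule.mem_sup.mpr ⟨u - v * x, h6,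
          v * x, Ideal.mem_span_singleton.mpr (dvd_mul_left x v), by ring⟩
      · intro hu
        obtain ⟨k, hk, z, hz, rfl⟩ := Submodule.mem_sup.mp hu
        obtain ⟨v, rfl⟩ := Ideal.mem_span_singleton.mp hz
        have heq : (k + x * v) * x ^ (t + 1) = k * x ^ (t + 1) + (x ^ (t + 2)) * v := by ring
        rw [heq]
        exact Ideal.add_mem _ (Ideal.mem_sup_left (Ideal.mul_mem_right _ _ hk))
          (Ideal.mem_sup_right (Ideal.mem_span_singleton.mpr (dvd_mul_right _ v)))
    · have hle : Ideal.span {x ^ (t + 2)} ≤ Ideal.span ({x ^ (t + 1)} : Set R) :=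
        Ideal.span_le.mpr (by
          simp only [Set.singleton_subset_iff, SetLike.mem_coe, Ideal.mem_span_singleton]
          exact pow_dvd_pow x (by omega))
      rw [sup_assoc, sup_eq_right.mpr hle]

/-- Powers (with positive exponents) of a weakly regular sequence are weakly regular. -/
theorem wrl_ofFn_pow : ∀ (n : ℕ) (g : Fin n → R) (t : Fin n → ℕ) (K : Ideal R),
    (∀ i, 1 ≤ t i) → wrl K (List.ofFn g) → wrl K (List.ofFn fun i => g i ^ t i) := by
  intro n
  induction n with
  | zero => intro g t K _ _; simp
  | succ n ih =>
    intro g t K ht hg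
    rw [List.ofFn_succ] at hg ⊢
    rw [wrl_cons] at hg
    refine wrl_cons.mpr ⟨fun u hu => nzd_pow hg.1 (t 0) u hu, ?_⟩
    have h2 : wrl (K ⊔ Ideal.span {g 0 ^ t 0}) (List.ofFn fun i => g i.succ) := by
      have := wrl_pow_quot hg.1 hg.2 (t 0 - 1)
      rwa [Nat.sub_add_cancel (ht 0)] at this
    exact ih (fun i => g i.succ) (fun i => t i.succ) _ (fun i => ht i.succ) h2

theorem wrl_append_left : ∀ (l₁ l₂ : List R) (K : Ideal R), wrl K (l₁ ++ l₂) → wrl K l₁ := by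
  intro l₁
  induction l₁ with
  | nil => intros; trivial
  | cons x l ih =>
    intro l₂ K h
    rw [List.cons_append, wrl_cons] at h
    exact wrl_cons.mpr ⟨h.1, ih l₂ _ h.2⟩

/-- The last element of a weakly regular list is a nonzerodivisor modulo the
span of the preceding ones. -/
theorem wrl_nzd_last : ∀ (l : List R) (K : Ideal R) (x : R), wrl K (l ++ [x]) →
    ∀ u : R, u * x ∈ K ⊔ Ideal.ofList l → u ∈ K ⊔ Ideal.ofList l := by
  intro l
  induction l with
  | nil =>
    intro K x h u hu
    simp only [Ideal.ofList_nil, sup_bot_eq] at hu ⊢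
    exact (wrl_cons.mp h).1 u hu
  | cons r l ih =>
    intro K x h u hu
    rw [List.cons_append, wrl_cons] at h
    have hrw : K ⊔ Ideal.ofList (r :: l) = (K ⊔ Ideal.span {r}) ⊔ Ideal.ofList l := by
      rw [Ideal.ofList_cons, ← sup_assoc]
    rw [hrw] at hu ⊢
    exact ih _ x h.2 u hu

lemma ofList_ofFn_eq {n : ℕ} (g : Fin n → R) :
    Ideal.ofList (List.ofFn g) = Ideal.span (Set.range g) := by
  unfold Ideal.ofList
  congr 1
  ext r
  simp [List.mem_ofFn]

/-- Relations on a weakly regular sequence are "trivial": each coefficient lies in the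
span of the other elements. -/
theorem h1_vanish : ∀ (n : ℕ) (g : Fin n → R), wrl ⊥ (List.ofFn g) →
    ∀ z : Fin n → R, (∑ i, z i * g i) = 0 →
    ∀ i, z i ∈ Ideal.span (g '' {j | j ≠ i}) := by
  intro n
  induction n with
  | zero => intro g _ z _ i; exact absurd i.2 (by omega)
  | succ n ih =>
    intro g hg z hrel i
    have hsplit : ∑ j : Fin n, z j.castSucc * g j.castSucc + z (Fin.last n) * g (Fin.last n) = 0 := by
      rw [← Fin.sum_univ_castSucc (f := fun i => z i * g i)]; exact hrel
    -- the last coefficient lies in the span of the previous elements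
    have hconcat : wrl (⊥ : Ideal R) (List.ofFn (fun j : Fin n => g j.castSucc) ++ [g (Fin.last n)]) := by
      have := List.ofFn_succ' g
      rw [List.concat_eq_append] at this
      rw [← this]
      exact hg
    have hmem : z (Fin.last n) * g (Fin.last n) ∈
        (⊥ : Ideal R) ⊔ Ideal.ofList (List.ofFn (fun j : Fin n => g j.castSucc)) := by
      rw [bot_sup_eq, ofList_ofFn_eq]
      have : z (Fin.last n) * g (Fin.last n)
          = - ∑ j : Fin n, z j.castSucc * g j.castSucc := by
        rw [eq_neg_iff_add_eq_zero, add_comm]; exact hsplit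
      rw [this]
      exact neg_mem (Ideal.sum_mem _ fun j _ =>
        Ideal.mul_mem_left _ _ (Ideal.subset_span ⟨j, rfl⟩))
    have hlastmem := wrl_nzd_last _ ⊥ (g (Fin.last n)) hconcat _ hmem
    rw [bot_sup_eq, ofList_ofFn_eq] at hlastmem
    obtain ⟨β, hβ⟩ := Submodule.mem_span_range_iff_exists_fun R |>.mp hlastmem
    simp only [smul_eq_mul] at hβ
    -- modified coefficients
    set z' : Fin n → R := fun j => z j.castSucc + β j * g (Fin.last n) with hz'
    have hrel' : ∑ j : Fin n, z' j * g j.castSucc = 0 := by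
      have : ∑ j : Fin n, z' j * g j.castSucc
          = ∑ j : Fin n, z j.castSucc * g j.castSucc
            + (∑ j : Fin n, β j * g j.castSucc) * g (Fin.last n) := by
        rw [Finset.sum_mul, ← Finset.sum_add_distrib]
        refine Finset.sum_congr rfl fun j _ => by simp only [hz']; ring
      rw [this, hβ]
      exact hsplit
    have hprefix : wrl (⊥ : Ideal R) (List.ofFn (fun j : Fin n => g j.castSucc)) :=
      wrl_append_left _ _ _ hconcat
    have hIH := ih _ hprefix z' hrel'
    -- now conclude for each i
    refine Fin.lastCases ?_ ?_ i
    · -- i = last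
      rw [← hβ]
      refine Ideal.sum_mem _ fun j _ => Ideal.mul_mem_left _ _ (Ideal.subset_span ?_)
      exact ⟨j.castSucc, (Fin.castSucc_lt_last j).ne, rfl⟩
    · -- i = castSucc i₀
      intro i₀
      have h1 : z i₀.castSucc = z' i₀ - β i₀ * g (Fin.last n) := by simp [hz']
      rw [h1]
      refine Ideal.sub_mem _ ?_ ?_
      · refine Ideal.span_le.mpr ?_ (hIH i₀)
        rintro r ⟨k, hk, rfl⟩
        exact Ideal.subset_span ⟨k.castSucc, by simpa [Fin.castSucc_inj] using hk, rfl⟩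
      · exact Ideal.mul_mem_left _ _ (Ideal.subset_span
          ⟨Fin.last n, (Fin.castSucc_lt_last i₀).ne', rfl⟩)

theorem wrl_of_forall : ∀ (l : List R) (K : Ideal R),
    (∀ (i : ℕ) (h : i < l.length) (u : R),
      u * l.get ⟨i, h⟩ ∈ K ⊔ Ideal.ofList (l.take i) → u ∈ K ⊔ Ideal.ofList (l.take i)) →
    wrl K l := by
  intro l
  induction l with
  | nil => intros; trivial
  | cons x l ih =>
    intro K h
    refine wrl_cons.mpr ⟨?_, ?_⟩
    · intro u hu
      have := h 0 (by simp) u (by simpa using hu)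
      simpa using this
    · refine ih _ ?_
      intro i hi u hu
      have h2 : (K ⊔ Ideal.span {x}) ⊔ Ideal.ofList (l.take i)
          = K ⊔ Ideal.ofList ((x :: l).take (i + 1)) := by
        rw [List.take_succ_cons, Ideal.ofList_cons, ← sup_assoc]
      rw [h2] at hu ⊢
      exact h (i + 1) (by simpa using hi) u hu

theorem wrl_of_isWeaklyRegular {l : List R}
    (h : RingTheory.Sequence.IsWeaklyRegular R l) : wrl (⊥ : Ideal R) l := by
  refine wrl_of_forall l ⊥ ?_
  intro i hi u hu
  rw [bot_sup_eq] at hu ⊢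
  have hreg := h.regular_mod_prev i hi
  have hsmul : (Ideal.ofList (l.take i) • ⊤ : Submodule R R) = Ideal.ofList (l.take i) := by
    simp [smul_eq_mul, Ideal.mul_top]
  rw [hsmul] at hreg
  rw [← Ideal.Quotient.eq_zero_iff_mem]
  refine hreg ?_
  show l.get ⟨i, hi⟩ • Ideal.Quotient.mk _ u = l.get ⟨i, hi⟩ • (0 : R ⧸ Ideal.ofList (l.take i))
  rw [smul_zero, ← Ideal.Quotient.mk_eq_mk, ← Submodule.Quotient.mk_smul, smul_eq_mul,
    Submodule.Quotient.mk_eq_zero]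
  rwa [mul_comm] at hu

/-- Key colon computation: coloning an ideal of powers of a weakly regular sequence
by one of the sequence elements just drops its exponent by one. -/
theorem colon_step {n : ℕ} {g : Fin n → R} (hg : wrl ⊥ (List.ofFn g))
    {e : Fin n → ℕ} (he : ∀ j, 1 ≤ e j) (i : Fin n) {x : R}
    (hx : x * g i ∈ Ideal.span (Set.range fun j => g j ^ e j)) :
    x ∈ Ideal.span (Set.range fun j => g j ^ Function.update e i (e i - 1) j) := by
  classical
  obtain ⟨y, hy⟩ := (Submodule.mem_span_range_iff_exists_fun R).mp hx
  simp only [smul_eq_mul] at hy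
  set T : Fin n → R := fun j => g j ^ Function.update e i 1 j with hT
  have hwT : wrl (⊥ : Ideal R) (List.ofFn T) := by
    refine wrl_ofFn_pow n g _ ⊥ ?_ hg
    intro j
    by_cases hj : j = i
    · subst hj; simp
    · rw [Function.update_of_ne hj]; exact he j
  set z : Fin n → R := fun j => if j = i then x - y i * g i ^ (e i - 1) else -(y j) with hz
  have hrel : ∑ j, z j * T j = 0 := by
    have key : ∀ j : Fin n, z j * T j = (if j = i then x * g i else 0) - y j * g j ^ e j := by
      intro j
      by_cases hj : j = i
      · subst hj
        have hp : g j ^ (e j - 1) * g j = g j ^ e j :=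
          pow_sub_one_mul (Nat.one_le_iff_ne_zero.mp (he j)) _
        simp only [hz, hT, if_pos rfl, Function.update_self, pow_one]
        calc (x - y j * g j ^ (e j - 1)) * g j
            = x * g j - y j * (g j ^ (e j - 1) * g j) := by ring
          _ = x * g j - y j * g j ^ e j := by rw [hp]
      · simp only [hz, hT, if_neg hj, Function.update_of_ne hj]
        ring
    rw [Finset.sum_congr rfl fun j _ => key j, Finset.sum_sub_distrib, hy,
      Finset.sum_ite_eq' Finset.univ i fun _ => x * g i, if_pos (Finset.mem_univ i), sub_self]
  have hcoef := h1_vanish n T hwT z hrel i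
  have hzi : z i = x - y i * g i ^ (e i - 1) := by rw [hz]; simp
  rw [hzi] at hcoef
  have hsub : Ideal.span (T '' {j | j ≠ i})
      ≤ Ideal.span (Set.range fun j => g j ^ Function.update e i (e i - 1) j) := by
    refine Ideal.span_le.mpr ?_
    rintro r ⟨j, hj, rfl⟩
    refine Ideal.subset_span ⟨j, ?_⟩
    have hj' : j ≠ i := hj
    show g j ^ Function.update e i (e i - 1) j = T j
    simp only [hT]
    rw [Function.update_of_ne hj', Function.update_of_ne hj']
  have h2 : y i * g i ^ (e i - 1)
      ∈ Ideal.span (Set.range fun j => g j ^ Function.update e i (e i - 1) j) := by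
    refine Ideal.mul_mem_left _ _ (Ideal.subset_span ⟨i, ?_⟩)
    simp only [Function.update_self]
  have := Ideal.add_mem _ (hsub hcoef) h2
  simpa using this

/-- Coloning by a monomial in the sequence elements. -/
theorem colon_monomial : ∀ (N n : ℕ) (g : Fin n → R), wrl ⊥ (List.ofFn g) →
    ∀ (s e : Fin n → ℕ), (∑ j, s j) = N → (∀ j, s j < e j) →
    ∀ x : R, x * ∏ j, g j ^ s j ∈ Ideal.span (Set.range fun j => g j ^ e j) →
    x ∈ Ideal.span (Set.range fun j => g j ^ (e j - s j)) := by
  intro N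
  induction N with
  | zero =>
    intro n g hg s e hsum hse x hx
    have hs0 : ∀ j, s j = 0 := by
      intro j
      exact (Finset.sum_eq_zero_iff.mp hsum) j (Finset.mem_univ j)
    simp only [hs0, pow_zero, Finset.prod_const_one, mul_one] at hx
    have hfun : (fun j => g j ^ (e j - s j)) = fun j => g j ^ e j := by
      funext j; rw [hs0 j, Nat.sub_zero]
    rw [hfun]
    exact hx
  | succ N ihN =>
    intro n g hg s e hsum hse x hx
    classical
    have hex : ∃ i, s i ≠ 0 := by
      by_contra hcon
      push_neg at hcon
      rw [Finset.sum_congr rfl fun j _ => hcon j, Finset.sum_const_zero] at hsum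
      omega
    obtain ⟨i, hi⟩ := hex
    set s' : Fin n → ℕ := Function.update s i (s i - 1) with hs'
    have herase : ∀ j ∈ Finset.univ.erase i, g j ^ s' j = g j ^ s j := by
      intro j hj
      rw [hs', Function.update_of_ne (Finset.mem_erase.mp hj).1]
    have hprod : (∏ j, g j ^ s j) = g i * ∏ j, g j ^ s' j := by
      rw [← Finset.mul_prod_erase Finset.univ (fun j => g j ^ s j) (Finset.mem_univ i),
        ← Finset.mul_prod_erase Finset.univ (fun j => g j ^ s' j) (Finset.mem_univ i),
        Finset.prod_congr rfl herase, ← mul_assoc]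
      congr 1
      rw [hs', Function.update_self, mul_comm, pow_sub_one_mul hi]
    rw [hprod] at hx
    have hx2 : (x * ∏ j, g j ^ s' j) * g i ∈ Ideal.span (Set.range fun j => g j ^ e j) := by
      have hcomm : (x * ∏ j, g j ^ s' j) * g i = x * (g i * ∏ j, g j ^ s' j) := by ring
      rw [hcomm]; exact hx
    have hstep := colon_step hg (e := e) (fun j => by have := hse j; omega) i hx2
    have hsum' : ∑ j, s' j = N := by
      have h3 : ∑ j ∈ Finset.univ.erase i, s' j = ∑ j ∈ Finset.univ.erase i, s j :=
        Finset.sum_congr rfl fun j hj => by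
          rw [hs', Function.update_of_ne (Finset.mem_erase.mp hj).1]
      have h4 := (Finset.add_sum_erase Finset.univ s' (Finset.mem_univ i)).symm
      have h5 := (Finset.add_sum_erase Finset.univ s (Finset.mem_univ i)).symm
      have h6 : s' i = s i - 1 := by rw [hs', Function.update_self]
      have hi' : 1 ≤ s i := Nat.one_le_iff_ne_zero.mpr hi
      rw [h4, h3, h6]
      rw [h5] at hsum
      omega
    have hse' : ∀ j, s' j < Function.update e i (e i - 1) j := by
      intro j
      by_cases hj : j = i
      · subst hj
        rw [hs', Function.update_self, Function.update_self]
        have := hse j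
        omega
      · rw [hs', Function.update_of_ne hj, Function.update_of_ne hj]
        exact hse j
    have hres := ihN n g hg s' (Function.update e i (e i - 1)) hsum' hse' _ hstep
    have hfun : (fun j => g j ^ (Function.update e i (e i - 1) j - s' j))
        = fun j => g j ^ (e j - s j) := by
      funext j
      by_cases hj : j = i
      · subst hj
        rw [hs', Function.update_self, Function.update_self]
        congr 1
        have := hse j
        omega
      · rw [hs', Function.update_of_ne hj, Function.update_of_ne hj]
    rwa [hfun] at hres

end St4Aux

/-- Let `R` be a Noetherian ring, `f 0, …, f (c-1)` a regular sequence,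
`F = ∏ f i`.  Then for `b > a ≥ 1`, `(𝐟^{[b]} : 𝐟^{[a]}) = F^{b-a} R + 𝐟^{[b]}`. -/
theorem statement4 (R : Type) [CommRing R] [IsNoetherianRing R]
    (c : ℕ) (f : Fin c → R)
    (hreg : RingTheory.Sequence.IsRegular R (List.ofFn f))
    (a b : ℕ) (ha : 1 ≤ a) (hab : a < b) :
    (Ideal.span (Set.range fun i => f i ^ b)).colon
        (Ideal.span (Set.range fun i => f i ^ a))
      = Ideal.span {(∏ i, f i) ^ (b - a)} ⊔ Ideal.span (Set.range fun i => f i ^ b) := by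
  classical
  have hwr : St4Aux.wrl (⊥ : Ideal R) (List.ofFn f) :=
    St4Aux.wrl_of_isWeaklyRegular hreg.toIsWeaklyRegular
  set Ib := Ideal.span (Set.range fun i => f i ^ b) with hIb
  apply le_antisymm
  · -- hard inclusion
    intro x hx
    have hxi : ∀ i : Fin c, x * f i ^ a ∈ Ib := fun i => by
      have := Submodule.mem_colon.mp hx (f i ^ a) (Ideal.subset_span ⟨i, rfl⟩)
      rwa [smul_eq_mul] at this
    have claim : ∀ d : ℕ, d ≤ c → ∃ y : R,
        x - y * ∏ j ∈ Finset.univ.filter (fun j : Fin c => c - d ≤ (j : ℕ)), f j ^ (b - a)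
          ∈ Ib := by
      intro d
      induction d with
      | zero =>
        intro _
        refine ⟨x, ?_⟩
        have hfe : Finset.univ.filter (fun j : Fin c => c - 0 ≤ (j : ℕ)) = ∅ := by
          ext j
          simp only [Finset.mem_filter, Finset.mem_univ, true_and, Finset.notMem_empty,
            iff_false, not_le, Nat.sub_zero]
          exact j.2
        rw [hfe, Finset.prod_empty, mul_one, sub_self]
        exact Ideal.zero_mem Ib
      | succ d ihd =>
        intro hdc
        obtain ⟨y, hy⟩ := ihd (by omega)
        set k : ℕ := c - (d + 1) with hk
        have hkc : k < c := by omega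
        set kf : Fin c := ⟨k, hkc⟩ with hkf
        set Q : R := ∏ j ∈ Finset.univ.filter (fun j : Fin c => k + 1 ≤ (j : ℕ)), f j ^ (b - a)
          with hQ
        have hcd : c - d = k + 1 := by omega
        rw [hcd] at hy
        -- the monomial exponents
        set S : Fin c → ℕ := fun j =>
          if (j : ℕ) = k then a else if k + 1 ≤ (j : ℕ) then b - a else 0 with hS
        have hSprod : (∏ j, f j ^ S j) = f kf ^ a * Q := by
          have hptwise : ∀ j ∈ Finset.univ, f j ^ S j
              = (if j = kf then f j ^ a else 1) * (if k + 1 ≤ (j : ℕ) then f j ^ (b - a) else 1) := by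
            intro j _
            simp only [hS]
            by_cases h1 : (j : ℕ) = k
            · have hj : j = kf := Fin.ext h1
              rw [if_pos h1, if_pos hj, if_neg (by omega)]
              rw [mul_one]
            · have hj : j ≠ kf := fun hcon => h1 (by rw [hcon])
              rw [if_neg h1, if_neg hj, one_mul]
              by_cases h2 : k + 1 ≤ (j : ℕ)
              · rw [if_pos h2, if_pos h2]
              · rw [if_neg h2, if_neg h2, pow_zero]
          rw [Finset.prod_congr rfl hptwise, Finset.prod_mul_distrib,
            Finset.prod_ite_eq' Finset.univ kf (fun j => f j ^ a),
            if_pos (Finset.mem_univ kf), ← Finset.prod_filter]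
        -- y * (monomial) ∈ Ib
        have hmon : y * ∏ j, f j ^ S j ∈ Ib := by
          rw [hSprod]
          have : y * (f kf ^ a * Q) = x * f kf ^ a - (x - y * Q) * f kf ^ a := by ring
          rw [this]
          exact Ideal.sub_mem _ (hxi kf) (Ideal.mul_mem_right _ _ hy)
        -- apply the colon lemma
        have hSlt : ∀ j, S j < (fun _ : Fin c => b) j := by
          intro j
          simp only [hS]
          by_cases h1 : (j : ℕ) = k
          · rw [if_pos h1]; omega
          · rw [if_neg h1]
            by_cases h2 : k + 1 ≤ (j : ℕ)
            · rw [if_pos h2]; omega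
            · rw [if_neg h2]; omega
        have hy2 := St4Aux.colon_monomial (∑ j, S j) c f hwr S (fun _ => b) rfl hSlt y hmon
        obtain ⟨v, hv⟩ := (Submodule.mem_span_range_iff_exists_fun R).mp hy2
        simp only [smul_eq_mul] at hv
        refine ⟨v kf, ?_⟩
        -- identify the new product
        have hins : Finset.univ.filter (fun j : Fin c => c - (d + 1) ≤ (j : ℕ))
            = insert kf (Finset.univ.filter (fun j : Fin c => k + 1 ≤ (j : ℕ))) := by
          ext j
          simp only [Finset.mem_filter, Finset.mem_univ, true_and, Finset.mem_insert, ← hk]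
          constructor
          · intro hj
            by_cases h1 : (j : ℕ) = k
            · exact Or.inl (Fin.ext h1)
            · exact Or.inr (by omega)
          · rintro (rfl | hj)
            · exact le_refl _
            · omega
        have hQk : (∏ j ∈ Finset.univ.filter (fun j : Fin c => c - (d + 1) ≤ (j : ℕ)),
            f j ^ (b - a)) = f kf ^ (b - a) * Q := by
          rw [hins, Finset.prod_insert (by simp [hkf])]
        rw [hQk]
        -- x - v kf * (f kf ^ (b-a) * Q) ∈ Ib
        have hyQ : y * Q - v kf * (f kf ^ (b - a) * Q) ∈ Ib := by
          have hexp : y * Q = ∑ j, v j * f j ^ (b - S j) * Q := by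
            rw [← hv, Finset.sum_mul]
          have hsplit : ∑ j, v j * f j ^ (b - S j) * Q
              = v kf * f kf ^ (b - S kf) * Q
                + ∑ j ∈ Finset.univ.erase kf, v j * f j ^ (b - S j) * Q :=
            (Finset.add_sum_erase Finset.univ _ (Finset.mem_univ kf)).symm
          have hSkf : S kf = a := by rw [hS]; simp [hkf]
          have : y * Q - v kf * (f kf ^ (b - a) * Q)
              = ∑ j ∈ Finset.univ.erase kf, v j * f j ^ (b - S j) * Q := by
            rw [hexp, hsplit, hSkf]; ring
          rw [this]
          refine Ideal.sum_mem _ ?_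
          intro j hj
          have hjne : j ≠ kf := (Finset.mem_erase.mp hj).1
          have hjnk : (j : ℕ) ≠ k := fun hcon => hjne (Fin.ext hcon)
          by_cases h2 : k + 1 ≤ (j : ℕ)
          · -- S j = b - a, and Q contains the factor f j ^ (b - a)
            have hSj : S j = b - a := by
              simp only [hS]; rw [if_neg hjnk, if_pos h2]
            have hQsplit : Q = f j ^ (b - a)
                * ∏ m ∈ (Finset.univ.filter (fun m : Fin c => k + 1 ≤ (m : ℕ))).erase j,
                    f m ^ (b - a) := by
              rw [hQ, ← Finset.mul_prod_erase _ _
                (Finset.mem_filter.mpr ⟨Finset.mem_univ j, h2⟩)]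
            have heq : v j * f j ^ (b - S j) * Q
                = v j * (f j ^ b
                  * ∏ m ∈ (Finset.univ.filter (fun m : Fin c => k + 1 ≤ (m : ℕ))).erase j,
                      f m ^ (b - a)) := by
              rw [hQsplit, hSj, ← mul_assoc, mul_assoc (v j), ← pow_add]
              have harith : b - (b - a) + (b - a) = b := by omega
              rw [harith, mul_assoc]
            rw [heq]
            exact Ideal.mul_mem_left _ _
              (Ideal.mul_mem_right _ _ (Ideal.subset_span ⟨j, rfl⟩))
          · -- S j = 0
            have hSj : S j = 0 := by
              simp only [hS]; rw [if_neg hjnk, if_neg h2]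
            rw [hSj, Nat.sub_zero]
            exact Ideal.mul_mem_right _ _
              (Ideal.mul_mem_left _ _ (Ideal.subset_span ⟨j, rfl⟩))
        have : x - v kf * (f kf ^ (b - a) * Q)
            = (x - y * Q) + (y * Q - v kf * (f kf ^ (b - a) * Q)) := by ring
        rw [this]
        exact Ideal.add_mem _ hy hyQ
    obtain ⟨y, hy⟩ := claim c le_rfl
    have huniv : Finset.univ.filter (fun j : Fin c => c - c ≤ (j : ℕ)) = Finset.univ := by
      ext j; simp
    rw [huniv, Finset.prod_pow] at hy
    refine Submodule.mem_sup.mpr ⟨y * (∏ i, f i) ^ (b - a), ?_, x - y * (∏ i, f i) ^ (b - a),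
      hy, by ring⟩
    exact Ideal.mem_span_singleton.mpr (dvd_mul_left _ y)
  · -- easy inclusion
    refine sup_le ?_ ?_
    · rw [Ideal.span_le]
      rintro r hr
      rw [Set.mem_singleton_iff] at hr
      subst hr
      rw [SetLike.mem_coe, Submodule.mem_colon]
      intro p hp
      rw [smul_eq_mul]
      refine Submodule.span_induction ?_ ?_ ?_ ?_ hp
      · rintro q ⟨i, rfl⟩
        have hFsplit : (∏ j, f j) ^ (b - a) = f i ^ (b - a) * ∏ m ∈ Finset.univ.erase i,
            f m ^ (b - a) := by
          rw [← Finset.prod_pow, ← Finset.mul_prod_erase _ _ (Finset.mem_univ i)]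
        rw [hFsplit, mul_comm (f i ^ (b - a)), mul_assoc, mul_comm (f i ^ (b - a)), ← pow_add]
        have hba : a + (b - a) = b := by omega
        rw [hba]
        exact Ideal.mul_mem_left _ _ (Ideal.subset_span ⟨i, rfl⟩)
      · rw [mul_zero]; exact Ideal.zero_mem Ib
      · intro q q' _ _ hq hq'
        rw [mul_add]; exact Ideal.add_mem _ hq hq'
      · intro t q _ hq
        rw [smul_eq_mul, ← mul_assoc, mul_comm _ t, mul_assoc]
        exact Ideal.mul_mem_left _ _ hq
    · intro p hp
      rw [Submodule.mem_colon]
      intro q _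
      rw [smul_eq_mul]
      exact Ideal.mul_mem_right _ _ hp
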